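/- For all bounded operators C, C' on H̃ and every z ∈ B_H, let w = P(C'ẑ) + ⟨(0,1), C'ẑ⟩·z ∈ H, where P : H̃ → H is the projection onto the first summand (w is the holomorphic gradient of f_{C'} at z). Then f_C(z)·f_{C'}(z) − ( k_z·⟨ẑ, C(w,0)⟩ + k_z²·⟨ẑ, C ẑ⟩·⟨z, w⟩ ) = f_{C ∘ ε ∘ C'}(z). In other words, the ∗-product f_C ∗ f_{C'} = f_C·f_{C'} − ∂f_C(grad f_{C'}) equals f_{C ∗ε C'}. -/

import Mathlib

/-- The extended Hilbert space `H̃ = H ⊕ ℂ` (Hilbert space direct sum). -/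
noncomputable abbrev ExtH (H : Type*) [NormedAddCommGroup H] [InnerProductSpace ℂ H] :=
  WithLp 2 (H × ℂ)

/-- The element `(z, a)` of `H̃`. -/
noncomputable def mk2 {H : Type*} [NormedAddCommGroup H] [InnerProductSpace ℂ H]
    (z : H) (a : ℂ) : ExtH H :=
  (WithLp.equiv 2 (H × ℂ)).symm (z, a)

/-- Projection of `H̃ = H ⊕ ℂ` onto the first summand. -/
noncomputable def fst2 {H : Type*} [NormedAddCommGroup H] [InnerProductSpace ℂ H]
    (p : ExtH H) : H :=
  ((WithLp.equiv 2 (H × ℂ)) p).1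

/-- The Kähler function `f_C(z) = ⟨ẑ, C ẑ⟩/(1 − ‖z‖²)` on the Hilbert ball, where
`ẑ = (z,1) ∈ H̃`. -/
noncomputable def kahlerFun {H : Type*} [NormedAddCommGroup H] [InnerProductSpace ℂ H]
    (C : ExtH H →L[ℂ] ExtH H) (z : H) : ℂ :=
  ((1 - ‖z‖ ^ 2 : ℝ) : ℂ)⁻¹ * (inner ℂ (mk2 z 1) (C (mk2 z 1)) : ℂ)

lemma inner_mk2_mk2 {H : Type*} [NormedAddCommGroup H] [InnerProductSpace ℂ H]
    (a : H) (b : ℂ) (c : H) (d : ℂ) :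
    (inner ℂ (mk2 a b) (mk2 c d) : ℂ) = (inner ℂ a c : ℂ) + starRingEnd ℂ b * d := by
  simp [mk2, WithLp.prod_inner_apply, RCLike.inner_apply, mul_comm]

lemma mk2_eq_self {H : Type*} [NormedAddCommGroup H] [InnerProductSpace ℂ H]
    (p : ExtH H) : mk2 (fst2 p) (((WithLp.equiv 2 (H × ℂ)) p).2) = p := rfl

lemma smul_mk2_sub {H : Type*} [NormedAddCommGroup H] [InnerProductSpace ℂ H]
    (l : ℂ) (z u : H) :
    l • mk2 z (1 : ℂ) - mk2 (u + l • z) 0 = mk2 (-u) l := by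
  apply (WithLp.equiv 2 (H × ℂ)).injective
  simp [mk2, Prod.ext_iff]

open ContinuousLinearMap in
/-- with `w = P(C'ẑ) + ⟨(0,1), C'ẑ⟩•z` (the holomorphic gradient of
`f_{C'}` at `z`), one has
`f_C(z)·f_{C'}(z) − (k_z⟨ẑ, C(w,0)⟩ + k_z²⟨ẑ, Cẑ⟩⟨z,w⟩) = f_{C∘ε∘C'}(z)`;
i.e. the ∗-product `f_C ∗ f_{C'}` equals `f_{C ∗ε C'}`. -/
theorem kahlerFun_star_product
    {H : Type*} [NormedAddCommGroup H] [InnerProductSpace ℂ H] [CompleteSpace H]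
    (ε : ExtH H →L[ℂ] ExtH H) (hε : ∀ (z : H) (l : ℂ), ε (mk2 z l) = mk2 (-z) l)
    (C C' : ExtH H →L[ℂ] ExtH H) (z : H) (hz : ‖z‖ < 1)
    (w : H)
    (hw : w = fst2 (C' (mk2 z 1)) + (inner ℂ (mk2 (0 : H) 1) (C' (mk2 z 1)) : ℂ) • z) :
    kahlerFun C z * kahlerFun C' z -
        (((1 - ‖z‖ ^ 2 : ℝ) : ℂ)⁻¹ * (inner ℂ (mk2 z 1) (C (mk2 w 0)) : ℂ)
          + (((1 - ‖z‖ ^ 2 : ℝ) : ℂ)⁻¹) ^ 2 * (inner ℂ (mk2 z 1) (C (mk2 z 1)) : ℂ)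
              * (inner ℂ z w : ℂ))
      = kahlerFun (C ∘L ε ∘L C') z := by
  set u : H := fst2 (C' (mk2 z 1)) with hu
  set l : ℂ := ((WithLp.equiv 2 (H × ℂ)) (C' (mk2 z 1))).2 with hl
  have hC' : C' (mk2 z 1) = mk2 u l := (mk2_eq_self _).symm
  have hlam : (inner ℂ (mk2 (0 : H) 1) (C' (mk2 z 1)) : ℂ) = l := by
    rw [hC', inner_mk2_mk2]; simp
  have hw' : w = u + l • z := by rw [hw, hlam]
  have hεC' : ε (C' (mk2 z 1)) = l • mk2 z 1 - mk2 w 0 := by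
    rw [hC', hε, hw', smul_mk2_sub]
  have hnR : (1 - ‖z‖ ^ 2 : ℝ) ≠ 0 := by nlinarith [norm_nonneg z]
  have hn : (1 : ℂ) - (‖z‖ : ℂ) ^ 2 ≠ 0 := by
    have := Complex.ofReal_ne_zero.mpr hnR
    push_cast at this
    exact this
  have hinner1 : (inner ℂ (mk2 z 1) (C' (mk2 z 1)) : ℂ) = (inner ℂ z u : ℂ) + l := by
    rw [hC', inner_mk2_mk2]; simp
  have hzw : (inner ℂ z w : ℂ) = (inner ℂ z u : ℂ) + l * ((‖z‖ ^ 2 : ℝ) : ℂ) := by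
    rw [hw', inner_add_right, inner_smul_right]
    rw [inner_self_eq_norm_sq_to_K]
    push_cast
    rfl
  have hRHS : (inner ℂ (mk2 z 1) ((C ∘L ε ∘L C') (mk2 z 1)) : ℂ)
      = l * (inner ℂ (mk2 z 1) (C (mk2 z 1)) : ℂ) - (inner ℂ (mk2 z 1) (C (mk2 w 0)) : ℂ) := by
    simp only [ContinuousLinearMap.comp_apply, hεC', map_sub, map_smul,
      inner_sub_right, inner_smul_right]
  have hcast : ((1 - ‖z‖ ^ 2 : ℝ) : ℂ) = 1 - (‖z‖ : ℂ) ^ 2 := by push_cast; ring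
  unfold kahlerFun
  rw [hRHS, hinner1, hzw, hcast]
  set A := (inner ℂ (mk2 z 1) (C (mk2 z 1)) : ℂ) with hA
  set B := (inner ℂ (mk2 z 1) (C (mk2 w 0)) : ℂ) with hB
  set a := (inner ℂ z u : ℂ) with ha
  push_cast
  field_simp
  ring
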